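/- Consider the scalar steady-state dynamics induced by SGD with weight decay on a scale-invariant loss: if the squared weight norm satisfies the fixed-point condition that the growth from the orthogonal gradient step balances the shrinkage from decay, i.e., ‖w‖² = (1 - γλ)²‖w‖² + γ²‖g‖² to first order in γ, then at the steady state ‖g‖/‖w‖ = sqrt(2λ/γ) + O(γ). -/

import Mathlib

/-- Exact steady state for SGD with weight decay on a scale-invariant loss:
with `w⁺ = (1-γλ)w - γg`, `⟨g,w⟩ = 0`, the fixed-point condition `‖w⁺‖ = ‖w‖` holds iff
`‖g‖²/‖w‖² = (1-(1-γλ)²)/γ² = 2λ/γ - λ²`. -/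
theorem steady_state_grad_weight_ratio
    {d : ℕ} (w g : EuclideanSpace ℝ (Fin d)) (hw : w ≠ 0)
    (horth : inner ℝ g w = (0 : ℝ))
    (γ lam : ℝ) (hγ : 0 < γ) (hlam : 0 < lam) (hgl : γ * lam < 1) :
    ‖(1 - γ * lam) • w - γ • g‖ = ‖w‖ ↔
      ‖g‖ ^ 2 / ‖w‖ ^ 2 = 2 * lam / γ - lam ^ 2 := by
  have hwn : ‖w‖ ≠ 0 := norm_ne_zero_iff.mpr hw
  have hiw : inner ℝ ((1 - γ * lam) • w) (γ • g) = (0 : ℝ) := by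
    rw [real_inner_smul_left, real_inner_smul_right, real_inner_comm, horth]
    ring
  have hsq : ‖(1 - γ * lam) • w - γ • g‖ ^ 2
      = (1 - γ * lam) ^ 2 * ‖w‖ ^ 2 + γ ^ 2 * ‖g‖ ^ 2 := by
    rw [norm_sub_sq_real, hiw, norm_smul, norm_smul]
    simp [abs_of_pos hγ, mul_pow, sq_abs]
  constructor
  · intro h
    have h2 : (1 - γ * lam) ^ 2 * ‖w‖ ^ 2 + γ ^ 2 * ‖g‖ ^ 2 = ‖w‖ ^ 2 := by
      rw [← hsq, h]
    field_simp
    nlinarith [h2]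
  · intro h
    have h2 : ‖g‖ ^ 2 = (2 * lam / γ - lam ^ 2) * ‖w‖ ^ 2 := by
      field_simp at h ⊢
      nlinarith [h]
    have : ‖(1 - γ * lam) • w - γ • g‖ ^ 2 = ‖w‖ ^ 2 := by
      rw [hsq, h2]
      field_simp
      ring
    have := congrArg Real.sqrt this
    simpa [Real.sqrt_sq (norm_nonneg _)] using this
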